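/- Let R > 0, let l ≥ 1 be an integer, and let κ, Q be real numbers. Suppose V, W, U : ℝ → ℝ are differentiable at every r ∈ (0,R) and satisfy, for all r ∈ (0,R): (i) W(r) + (l+1)·V(r) = 0, and (ii) 0 = −( κ·(l+1)/2 )·[ V'(r) − W(r)/r ] + (l+2)·Q·[ U'(r) + (l+1)·U(r)/r ]. Then the function F(r) := −( κ·(l+1)/2 )·V(r) + (l+2)·Q·U(r) satisfies F'(r) + ((l+1)/r)·F(r) = 0 for all r ∈ (0,R), and consequently r ↦ r^(l+1)·F(r) is constant on (0,R). -/

import Mathlib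

open Set

/-- Axisymmetric (`m = 0`) polar-led case: the combination
`F = −(κ(l+1)/2)·V + (l+2)·Q·U` satisfies `F' + ((l+1)/r)·F = 0` on `(0,R)`,
hence `r^(l+1) · F` is constant there. -/
theorem stmt_5 (R : ℝ) (hR : 0 < R) (l : ℕ) (hl : 1 ≤ l)
    (κ Q : ℝ) (V W U V' W' U' : ℝ → ℝ)
    (hV : ∀ r ∈ Ioo (0:ℝ) R, HasDerivAt V (V' r) r)
    (hW : ∀ r ∈ Ioo (0:ℝ) R, HasDerivAt W (W' r) r)
    (hU : ∀ r ∈ Ioo (0:ℝ) R, HasDerivAt U (U' r) r)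
    (h1 : ∀ r ∈ Ioo (0:ℝ) R, W r + ((l:ℝ) + 1) * V r = 0)
    (h2 : ∀ r ∈ Ioo (0:ℝ) R,
      0 = -(κ * ((l:ℝ) + 1) / 2) * (V' r - W r / r)
          + ((l:ℝ) + 2) * Q * (U' r + ((l:ℝ) + 1) * U r / r)) :
    (∀ r ∈ Ioo (0:ℝ) R,
      (-(κ * ((l:ℝ) + 1) / 2) * V' r + ((l:ℝ) + 2) * Q * U' r)
        + (((l:ℝ) + 1) / r) *
            (-(κ * ((l:ℝ) + 1) / 2) * V r + ((l:ℝ) + 2) * Q * U r) = 0) ∧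
    (∀ r ∈ Ioo (0:ℝ) R, ∀ s ∈ Ioo (0:ℝ) R,
      r ^ (l + 1) * (-(κ * ((l:ℝ) + 1) / 2) * V r + ((l:ℝ) + 2) * Q * U r)
        = s ^ (l + 1) * (-(κ * ((l:ℝ) + 1) / 2) * V s + ((l:ℝ) + 2) * Q * U s)) := by
  set c₁ : ℝ := -(κ * ((l:ℝ) + 1) / 2) with hc₁
  set c₂ : ℝ := ((l:ℝ) + 2) * Q with hc₂
  have key : ∀ r ∈ Ioo (0:ℝ) R,
      (c₁ * V' r + c₂ * U' r) + (((l:ℝ) + 1) / r) * (c₁ * V r + c₂ * U r) = 0 := by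
    intro r hr
    have hrpos : (0:ℝ) < r := hr.1
    have hWr : W r = -(((l:ℝ) + 1) * V r) := by have := h1 r hr; linarith
    have h2' := h2 r hr
    rw [hWr] at h2'
    have hrne : r ≠ 0 := ne_of_gt hrpos
    field_simp at h2' ⊢
    ring_nf at h2' ⊢
    linarith
  refine ⟨key, ?_⟩
  -- constancy of g r = r^(l+1) * F r
  set F : ℝ → ℝ := fun r => c₁ * V r + c₂ * U r with hF
  set g : ℝ → ℝ := fun r => r ^ (l + 1) * F r with hg
  have hgd : ∀ r ∈ Ioo (0:ℝ) R, HasDerivAt g 0 r := by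
    intro r hr
    have hrne : r ≠ 0 := ne_of_gt hr.1
    have hFd : HasDerivAt F (c₁ * V' r + c₂ * U' r) r :=
      ((hV r hr).const_mul c₁).add ((hU r hr).const_mul c₂)
    have hpow : HasDerivAt (fun x : ℝ => x ^ (l + 1)) (((l:ℝ) + 1) * r ^ l) r := by
      simpa using hasDerivAt_pow (l + 1) r
    have := hpow.mul hFd
    refine this.congr_deriv ?_
    have hk := key r hr
    have : (c₁ * V' r + c₂ * U' r) = -(((l:ℝ) + 1) / r) * F r := by
      rw [hF]; linarith
    rw [this]
    field_simp
    ring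
  intro r hr s hs
  have hdiff : DifferentiableOn ℝ g (Ioo 0 R) :=
    fun x hx => ((hgd x hx).differentiableAt).differentiableWithinAt
  refine (convex_Ioo 0 R).is_const_of_fderivWithin_eq_zero hdiff ?_ hr hs
  intro x hx
  rw [fderivWithin_of_isOpen isOpen_Ioo hx, (hgd x hx).hasFDerivAt.fderiv]
  ext y; simp
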